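/- If φ is proper convex and w⁺ minimizes u ↦ φ(u) + (1/β) D(u, ŵ), then for all w ∈ E: φ(w⁺) + (1/β) D(w⁺, ŵ) + (1/β) D(w, w⁺) ≤ φ(w) + (1/β) D(w, ŵ). -/

import Mathlib

open scoped RealInnerProductSpace

theorem stmt_5 {E : Type*} [NormedAddCommGroup E] [InnerProductSpace ℝ E]
    [FiniteDimensional ℝ E] (H : E → ℝ) (hH : Differentiable ℝ H)
    (hHconv : ConvexOn ℝ Set.univ H)
    (D : E → E → ℝ)
    (hD : ∀ u v, D u v = H u - H v - (inner ℝ (gradient H v) (u - v) : ℝ))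
    (φ : E → ℝ) (hφ : ConvexOn ℝ Set.univ φ)
    (β : ℝ) (hβ : 0 < β) (what wplus : E)
    (hmin : ∀ u : E, φ wplus + (1 / β) * D wplus what ≤ φ u + (1 / β) * D u what) :
    ∀ w : E, φ wplus + (1 / β) * D wplus what + (1 / β) * D w wplus
      ≤ φ w + (1 / β) * D w what := by
  intro w
  set v : E := w - wplus with hv
  set f : ℝ → ℝ := fun t => H (wplus + t • v) with hf
  have hline : HasDerivAt (fun t : ℝ => wplus + t • v) v 0 := by
    simpa using ((hasDerivAt_id (0:ℝ)).smul_const v).const_add wplus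
  have hfd : HasDerivAt f (⟪gradient H wplus, v⟫) 0 := by
    have h1 : HasFDerivAt H (InnerProductSpace.toDual ℝ E (gradient H wplus)) wplus :=
      (hH wplus).hasGradientAt.hasFDerivAt
    have h2 : HasFDerivAt H (InnerProductSpace.toDual ℝ E (gradient H wplus)) (wplus + (0:ℝ) • v) := by
      simpa using h1
    have h3 := h2.comp_hasDerivAt 0 hline
    rw [InnerProductSpace.toDual_apply_apply] at h3
    exact h3
  have hslope : Filter.Tendsto (slope f 0) (nhdsWithin 0 (Set.Ioi 0))
      (nhds (⟪gradient H wplus, v⟫)) :=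
    (hasDerivAt_iff_tendsto_slope.1 hfd).mono_left
      (nhdsWithin_mono _ (fun t ht => by simpa using ne_of_gt ht))
  have hbound : ∀ t : ℝ, t ∈ Set.Ioc (0:ℝ) 1 →
      β * (φ wplus - φ w) + ⟪gradient H what, v⟫ ≤ slope f 0 t := by
    intro t ht
    obtain ⟨ht0, ht1⟩ := ht
    have hu := hmin (wplus + t • v)
    have hconv : φ (wplus + t • v) ≤ (1 - t) * φ wplus + t * φ w := by
      have := hφ.2 (Set.mem_univ wplus) (Set.mem_univ w)
        (by linarith : (0:ℝ) ≤ 1 - t) (le_of_lt ht0) (by ring)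
      have he : (1 - t) • wplus + t • w = wplus + t • v := by
        rw [hv]; module
      simpa [he, smul_eq_mul] using this
    rw [hD, hD] at hu
    have hft : f t = H (wplus + t • v) := rfl
    have hf0 : f 0 = H wplus := by simp [hf]
    have hinner : (⟪gradient H what, (wplus + t • v) - what⟫ : ℝ)
        = ⟪gradient H what, wplus - what⟫ + t * ⟪gradient H what, v⟫ := by
      have he : (wplus + t • v) - what = (wplus - what) + t • v := by abel
      rw [he, inner_add_right, inner_smul_right]
    rw [hinner] at hu
    have key : 0 ≤ t * (φ w - φ wplus)
        + (1/β) * (f t - f 0 - t * ⟪gradient H what, v⟫) := by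
      rw [hft, hf0]
      nlinarith [hu, hconv]
    have key' : 0 ≤ β * (t * (φ w - φ wplus)) + (f t - f 0 - t * ⟪gradient H what, v⟫) := by
      have := mul_le_mul_of_nonneg_left key hβ.le
      have hne : β ≠ 0 := ne_of_gt hβ
      field_simp at this
      nlinarith [this]
    have hslope_eq : slope f 0 t = (f t - f 0) / t := by
      simp [slope_def_field]
    rw [hslope_eq, le_div_iff₀ ht0]
    nlinarith [key']
  have hev : ∀ᶠ t in nhdsWithin (0:ℝ) (Set.Ioi 0),
      β * (φ wplus - φ w) + ⟪gradient H what, v⟫ ≤ slope f 0 t := by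
    filter_upwards [Ioc_mem_nhdsGT_of_mem (Set.left_mem_Ico.2 one_pos)] with t ht
      using hbound t ht
  have hlim : β * (φ wplus - φ w) + ⟪gradient H what, v⟫ ≤ ⟪gradient H wplus, v⟫ :=
    ge_of_tendsto hslope hev
  rw [hD, hD, hD]
  have h1 : (⟪gradient H what, w - what⟫ : ℝ) - ⟪gradient H what, wplus - what⟫
      = ⟪gradient H what, v⟫ := by
    rw [← inner_sub_right]; congr 1; rw [hv]; abel
  have h2 : (⟪gradient H wplus, w - wplus⟫ : ℝ) = ⟪gradient H wplus, v⟫ := by rw [hv]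
  have h1' : (1/β) * ((⟪gradient H what, w - what⟫ : ℝ) - ⟪gradient H what, wplus - what⟫)
      = (1/β) * ⟪gradient H what, v⟫ := by rw [h1]
  have goal' : φ wplus ≤ φ w + (1/β) * (⟪gradient H wplus, v⟫ - ⟪gradient H what, v⟫) := by
    rw [show (1/β) * ((⟪gradient H wplus, v⟫:ℝ) - ⟪gradient H what, v⟫)
        = ((⟪gradient H wplus, v⟫:ℝ) - ⟪gradient H what, v⟫)/β from by ring,
      ← sub_le_iff_le_add', le_div_iff₀ hβ]
    nlinarith [hlim]
  rw [h2]
  nlinarith [goal', h1']
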